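/- Let n ≥ 1, let J ∈ ℝ^{n×n}, let λ ∈ ℝ be a simple eigenvalue of J (a root of the characteristic polynomial of J of multiplicity exactly one) with eigenvector v ≠ 0, Jv = λv. Let V ∈ ℝ^{n×(n−1)} be a matrix of rank n−1 whose columns are orthogonal to v, i.e. Vᵀv = 0. Then the (n−1)×(n−1) matrix Vᵀ(J − λI)V is invertible. -/

import Mathlib

open Matrix

/-- Euclidean norm of a vector in `ℝⁿ`. -/
noncomputable def e2norm {n : ℕ} (v : Fin n → ℝ) : ℝ := Real.sqrt (∑ i, v i ^ 2)

/-- Frobenius norm of a real matrix. -/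
noncomputable def frobNorm {n m : ℕ} (M : Matrix (Fin n) (Fin m) ℝ) : ℝ :=
  Real.sqrt (∑ i, ∑ j, M i j ^ 2)

/-- Spectral norm: the supremum of `‖M x‖` over Euclidean-unit vectors `x`. -/
noncomputable def specNorm {n m : ℕ} (M : Matrix (Fin n) (Fin m) ℝ) : ℝ :=
  sSup ((fun x => e2norm (M.mulVec x)) '' {x : Fin m → ℝ | e2norm x = 1})

open Polynomial

lemma two_le_rootMultiplicity_of_two_eigenvectors {n : ℕ}
    (J : Matrix (Fin n) (Fin n) ℝ) (lam : ℝ) {v w : Fin n → ℝ}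
    (hv : J.mulVec v = lam • v) (hw : J.mulVec w = lam • w)
    (hli : LinearIndependent ℝ ![v, w]) :
    2 ≤ Polynomial.rootMultiplicity lam J.charpoly := by
  classical
  have hvw : v ≠ w := by
    intro h
    have := hli.injective (show ![v,w] 0 = ![v,w] 1 by simp [h])
    simp at this
  have hsub : LinearIndepOn ℝ id ({v, w} : Set (Fin n → ℝ)) := by
    have h2 := hli.linearIndepOn_id
    have : Set.range ![v, w] = {v, w} := by
      ext x; simp [Fin.exists_fin_two, or_comm]
    rwa [this] at h2
  set t := hsub.extend (Set.subset_univ ({v, w} : Set (Fin n → ℝ))) with ht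
  letI : Fintype t := FiniteDimensional.fintypeBasisIndex (Module.Basis.extend hsub)
  have hvt : v ∈ t := hsub.subset_extend _ (by simp)
  have hwt : w ∈ t := hsub.subset_extend _ (by simp)
  let b : Module.Basis t ℝ (Fin n → ℝ) := Module.Basis.extend hsub
  let iv : t := ⟨v, hvt⟩
  let iw : t := ⟨w, hwt⟩
  have hij : iv ≠ iw := by
    simp only [iv, iw, ne_eq, Subtype.mk.injEq]
    exact hvw
  set B := LinearMap.toMatrix b b (Matrix.toLin' J) with hB
  have hBJ : B.charpoly = J.charpoly := by
    rw [hB, LinearMap.charpoly_toMatrix,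
      ← LinearMap.charpoly_toMatrix (Matrix.toLin' J) (Pi.basisFun ℝ (Fin n)),
      LinearMap.toMatrix_eq_toMatrix', LinearMap.toMatrix'_toLin']
  -- columns of B at iv, iw
  have hcol : ∀ (j : t), J.mulVec (j : Fin n → ℝ) = lam • (j : Fin n → ℝ) →
      ∀ i, B i j = if i = j then lam else 0 := by
    intro j hj i
    rw [hB, LinearMap.toMatrix_apply]
    have hbj : b j = (j : Fin n → ℝ) := by exact Module.Basis.extend_apply_self hsub j
    rw [hbj, Matrix.toLin'_apply, hj, ← hbj, _root_.map_smul, Module.Basis.repr_self]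
    simp [Finsupp.single_apply, eq_comm]
  -- charmatrix columns
  have hcolchar : ∀ (j : t), (∀ i, B i j = if i = j then lam else 0) →
      (fun i => charmatrix B i j) = (X - C lam) • (Pi.single j 1 : t → ℝ[X]) := by
    intro j hj
    funext i
    by_cases h : i = j
    · subst h
      rw [charmatrix_apply_eq, hj]
      simp [Pi.single_apply]
    · rw [charmatrix_apply_ne _ _ _ h, hj]
      simp [Pi.single_apply, h]
  have key : (X - C lam) ^ 2 ∣ B.charpoly := by
    have e1 : B.charpoly = det (updateCol (charmatrix B)
        iv ((X - C lam) • (Pi.single iv 1 : t → ℝ[X]))) := by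
      rw [← hcolchar iv (hcol iv (by simpa using hv)), updateCol_eq_self]
      rfl
    set M1 := updateCol (charmatrix B) iv (Pi.single iv 1 : t → ℝ[X]) with hM1
    have e2 : det M1 = (X - C lam) * det (updateCol M1 iw (Pi.single iw 1 : t → ℝ[X])) := by
      have hcolM1 : (fun i => M1 i iw) = (X - C lam) • (Pi.single iw 1 : t → ℝ[X]) := by
        have := hcolchar iw (hcol iw (by simpa using hw))
        funext i
        rw [hM1, updateCol_apply, if_neg hij.symm]
        exact congrFun this i
      conv_lhs => rw [← updateCol_eq_self M1 iw, hcolM1, det_updateCol_smul]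
    rw [e1, det_updateCol_smul, e2]
    exact ⟨(M1.updateCol iw (Pi.single iw 1)).det, by ring⟩
  rw [← hBJ, Polynomial.le_rootMultiplicity_iff (B.charpoly_monic.ne_zero)]
  exact key

lemma aeval_mulVec_eigen {n : ℕ} (J : Matrix (Fin n) (Fin n) ℝ) (lam : ℝ) (v : Fin n → ℝ)
    (heig : J.mulVec v = lam • v) (p : ℝ[X]) :
    (Polynomial.aeval J p).mulVec v = p.eval lam • v := by
  have hpow : ∀ k : ℕ, (J ^ k).mulVec v = lam ^ k • v := by
    intro k
    induction k with
    | zero => simp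
    | succ k ih =>
      rw [pow_succ, ← Matrix.mulVec_mulVec, heig, Matrix.mulVec_smul, ih, smul_smul, pow_succ]
      ring_nf
  induction p using Polynomial.induction_on' with
  | add p q hp hq => rw [map_add, Matrix.add_mulVec, hp, hq, eval_add, add_smul]
  | monomial k c =>
    rw [aeval_monomial, eval_monomial, Algebra.algebraMap_eq_smul_one, smul_mul_assoc, one_mul,
      Matrix.smul_mulVec, hpow, smul_smul]

/-- if `λ` is a simple eigenvalue of `J` with eigenvector `v`,
and `V` has full rank `n-1` with columns orthogonal to `v`, then
`Vᵀ(J - λI)V` is invertible. -/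
theorem projected_shifted_jacobian_invertible
    {n : ℕ} (hn : 1 ≤ n) (J : Matrix (Fin n) (Fin n) ℝ) (lam : ℝ)
    (hsimple : Polynomial.rootMultiplicity lam J.charpoly = 1)
    (v : Fin n → ℝ) (hv : v ≠ 0) (heig : J.mulVec v = lam • v)
    (V : Matrix (Fin n) (Fin (n - 1)) ℝ)
    (hrank : V.rank = n - 1) (hVv : Vᵀ.mulVec v = 0) :
    IsUnit (Vᵀ * (J - lam • 1) * V) := by
  classical
  set A := J - lam • (1 : Matrix (Fin n) (Fin n) ℝ) with hA
  have hAv : A.mulVec v = 0 := by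
    rw [hA, Matrix.sub_mulVec, heig, Matrix.smul_mulVec, Matrix.one_mulVec, sub_self]
  -- charpoly factorization
  have hch0 : J.charpoly ≠ 0 := J.charpoly_monic.ne_zero
  have h1dvd : (X - C lam) ∣ J.charpoly := by
    have : (X - C lam) ^ 1 ∣ J.charpoly := by
      rw [← Polynomial.le_rootMultiplicity_iff hch0, hsimple]
    simpa using this
  obtain ⟨q, hq⟩ := h1dvd
  have hqlam : q.eval lam ≠ 0 := by
    intro h
    obtain ⟨r, hr⟩ := Polynomial.dvd_iff_isRoot.mpr h
    have : (X - C lam) ^ 2 ∣ J.charpoly := ⟨r, by rw [hq, hr]; ring⟩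
    rw [← Polynomial.le_rootMultiplicity_iff hch0, hsimple] at this
    omega
  -- Cayley–Hamilton: q(J) * A = 0
  have hXc : (Polynomial.aeval J) (X - C lam) = A := by
    rw [map_sub, Polynomial.aeval_X, Polynomial.aeval_C, hA, Algebra.algebraMap_eq_smul_one]
  have hQA : (Polynomial.aeval J q) * A = 0 := by
    have h0 : Polynomial.aeval J (q * (X - C lam)) = 0 := by
      rw [mul_comm, ← hq]; exact Matrix.aeval_self_charpoly J
    rwa [_root_.map_mul, hXc] at h0
  -- kernel of Vᵀ is spanned by v
  have hker : ∀ u : Fin n → ℝ, Vᵀ.mulVec u = 0 → ∃ c : ℝ, u = c • v := by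
    have hrt : Vᵀ.rank = n - 1 := by rw [Matrix.rank_transpose, hrank]
    have hrn := LinearMap.finrank_range_add_finrank_ker (Vᵀ.mulVecLin)
    rw [show Module.finrank ℝ ↥(LinearMap.range Vᵀ.mulVecLin) = Vᵀ.rank from rfl, hrt,
      Module.finrank_fin_fun] at hrn
    have hker1 : Module.finrank ℝ ↥(LinearMap.ker Vᵀ.mulVecLin) = 1 := by omega
    have hsp : (Submodule.span ℝ {v}) ≤ LinearMap.ker Vᵀ.mulVecLin := by
      rw [Submodule.span_singleton_le_iff_mem, LinearMap.mem_ker, Matrix.mulVecLin_apply]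
      exact hVv
    have heqk : (Submodule.span ℝ {v}) = LinearMap.ker Vᵀ.mulVecLin :=
      Submodule.eq_of_le_of_finrank_le hsp
        (by rw [hker1, finrank_span_singleton hv])
    intro u hu
    have : u ∈ Submodule.span ℝ ({v} : Set (Fin n → ℝ)) := by
      rw [heqk]; exact hu
    obtain ⟨c, hc⟩ := Submodule.mem_span_singleton.mp this
    exact ⟨c, hc.symm⟩
  -- V has trivial kernel
  have hinj : ∀ x : Fin (n-1) → ℝ, V.mulVec x = 0 → x = 0 := by
    have hrn := LinearMap.finrank_range_add_finrank_ker (V.mulVecLin)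
    rw [show Module.finrank ℝ ↥(LinearMap.range V.mulVecLin) = V.rank from rfl, hrank,
      Module.finrank_fin_fun] at hrn
    have hker0 : Module.finrank ℝ ↥(LinearMap.ker V.mulVecLin) = 0 := by omega
    rw [Submodule.finrank_eq_zero] at hker0
    intro x hx
    have : x ∈ LinearMap.ker V.mulVecLin := hx
    rw [hker0] at this
    simpa using this
  -- main argument
  rw [Matrix.isUnit_iff_isUnit_det, isUnit_iff_ne_zero]
  intro hdet
  obtain ⟨x, hx0, hxz⟩ := (Matrix.exists_mulVec_eq_zero_iff).mpr hdet
  set w := V.mulVec x with hw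
  have hw0 : w ≠ 0 := fun h => hx0 (hinj x h)
  have h1 : Vᵀ.mulVec (A.mulVec w) = 0 := by
    rw [hw, Matrix.mulVec_mulVec, Matrix.mulVec_mulVec]
    exact hxz
  obtain ⟨c, hc⟩ := hker _ h1
  have h2 : (Polynomial.aeval J q).mulVec (A.mulVec w) = 0 := by
    rw [Matrix.mulVec_mulVec, hQA, Matrix.zero_mulVec]
  rw [hc, Matrix.mulVec_smul, aeval_mulVec_eigen J lam v heig, smul_smul] at h2
  have hc0 : c = 0 := by
    rcases smul_eq_zero.mp h2 with h | h
    · exact (mul_eq_zero.mp h).resolve_right hqlam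
    · exact absurd h hv
  have hAw : A.mulVec w = 0 := by rw [hc, hc0, zero_smul]
  have hJw : J.mulVec w = lam • w := by
    have := hAw
    rw [hA, Matrix.sub_mulVec, Matrix.smul_mulVec, Matrix.one_mulVec, sub_eq_zero] at this
    exact this
  have horth : v ⬝ᵥ w = 0 := by
    rw [hw, Matrix.dotProduct_mulVec, ← Matrix.mulVec_transpose, hVv, zero_dotProduct]
  by_cases hcase : ∀ a : ℝ, a • v ≠ w
  · have hli : LinearIndependent ℝ ![w, v] := by
      rw [linearIndependent_fin2]
      refine ⟨by simpa using hv, fun a => by simpa using hcase a⟩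
    have := two_le_rootMultiplicity_of_two_eigenvectors J lam hJw heig hli
    omega
  · push_neg at hcase
    obtain ⟨a, ha⟩ := hcase
    rw [← ha, dotProduct_smul, smul_eq_mul, mul_eq_zero] at horth
    rcases horth with h | h
    · exact hw0 (by rw [← ha, h, zero_smul])
    · exact hv (by rwa [dotProduct_self_eq_zero] at h)
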